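/- arXiv:1805.06940 — 2 statements merged into one kernel-verified Lean document; each statement's English description precedes it below -/
import Mathlib

section
/- For the constant compactly supported potential and 0 ≤ y < x ≤ d, ω ≠ 0, ω² ≠ C, the product of the Jost solutions satisfies y1(x,ω)·y2(y,ω) = e^{iωd}·( cos(α(d−x+y)) − (iω/α)·sin(α(d−x+y)) − (C/α²)·sin(α(d−x))·sin(αy) ), where α is a square root of ω² − C; consequently the Green function G(x,y;ω²) = y1(x,ω)y2(y,ω)/(2iω·a(ω)) equals e^{iωd}/(2iω·a(ω)) times that expression. -/
open Complex Filter Topology Asymptotics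

lemma jost_ode_unique (d : ℝ) (C : ℝ) (ω α : ℂ) (hα : α ^ 2 = ω ^ 2 - C) (hαne : α ≠ 0)
    (g g' : ℝ → ℂ) (hg : ∀ x, HasDerivAt g (g' x) x)
    (c : ℝ) (hc : c ∈ Set.Icc (0:ℝ) d)
    (hg' : ∀ x : ℝ, g' x = g' c +
      ∫ t in c..x, (((if t ∈ Set.Icc 0 d then C else 0 : ℝ) : ℂ) - ω ^ 2) * g t) :
    ∀ x ∈ Set.Icc (0:ℝ) d,
      g x = (g c + g' c / (Complex.I * α)) / 2 * Complex.exp (Complex.I * α * ((x:ℂ) - c))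
          + (g c - g' c / (Complex.I * α)) / 2 *
              Complex.exp (-(Complex.I * α * ((x:ℂ) - c))) := by
  have hdle : (0:ℝ) ≤ d := le_trans hc.1 hc.2
  set F : ℝ → ℂ := fun t => (((if t ∈ Set.Icc 0 d then C else 0 : ℝ) : ℂ) - ω ^ 2) * g t
    with hF
  have hK : ((C : ℂ) - ω ^ 2) = -α ^ 2 := by linear_combination hα
  have gcont : Continuous g := by
    rw [continuous_iff_continuousAt]; exact fun x => (hg x).continuousAt
  have hFeq : ∀ t ∈ Set.Icc (0:ℝ) d, F t = -α ^ 2 * g t := by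
    intro t ht
    simp only [hF, if_pos ht, hK]
  have hFmeas : Measurable F := by
    apply Measurable.mul _ gcont.measurable
    apply Measurable.sub _ measurable_const
    exact (Complex.measurable_ofReal.comp
      (Measurable.ite measurableSet_Icc measurable_const measurable_const))
  have hFint : ∀ a b : ℝ, a ∈ Set.Icc (0:ℝ) d → b ∈ Set.Icc (0:ℝ) d →
      IntervalIntegrable F MeasureTheory.volume a b := by
    intro a b ha hb
    have hsub : Set.uIcc a b ⊆ Set.Icc (0:ℝ) d := Set.uIcc_subset_Icc ha hb
    have : ContinuousOn F (Set.uIcc a b) := by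
      apply ((continuous_const.mul gcont).continuousOn).congr
      intro t ht
      exact hFeq t (hsub ht)
    exact this.intervalIntegrable
  have hg'eq : g' = fun x => g' c + ∫ t in c..x, F t := funext hg'
  have hcontg' : ContinuousOn g' (Set.Icc (0:ℝ) d) := by
    rw [hg'eq]
    apply ContinuousOn.add continuousOn_const
    have := intervalIntegral.continuousOn_primitive_interval'
      (μ := MeasureTheory.volume) (f := F) (b₁ := (0:ℝ)) (b₂ := d) (a := c)
      (hFint 0 d ⟨le_refl _, hdle⟩ ⟨hdle, le_refl _⟩)
      (by rw [Set.uIcc_of_le hdle]; exact hc)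
    rwa [Set.uIcc_of_le hdle] at this
  have hg'' : ∀ x ∈ Set.Ico (0:ℝ) d, HasDerivWithinAt g' (-α ^ 2 * g x) (Set.Ici x) x := by
    intro x hx
    have hxm : x ∈ Set.Icc (0:ℝ) d := ⟨hx.1, hx.2.le⟩
    have hint : IntervalIntegrable F MeasureTheory.volume c x := hFint c x hc hxm
    have hmeas : StronglyMeasurableAtFilter F (𝓝[Set.Ioi x] x) :=
      hFmeas.stronglyMeasurable.stronglyMeasurableAtFilter
    have hev : ∀ᶠ t in 𝓝[Set.Ioi x] x, F t = -α ^ 2 * g t := by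
      filter_upwards [self_mem_nhdsWithin, nhdsWithin_le_nhds (Iio_mem_nhds hx.2)]
        with t h1 h2
      exact hFeq t ⟨le_trans hx.1 (le_of_lt h1), le_of_lt h2⟩
    have hcont : ContinuousWithinAt F (Set.Ioi x) x := by
      apply ((continuous_const.mul gcont).continuousAt.continuousWithinAt).congr_of_eventuallyEq hev
      exact hFeq x hxm
    have hD : HasDerivWithinAt (fun u => ∫ t in c..u, F t) (F x) (Set.Ici x) x :=
      intervalIntegral.integral_hasDerivWithinAt_right (s := Set.Ici x) (t := Set.Ioi x) hint hmeas hcont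
    rw [hg'eq, ← hFeq x hxm]
    exact (hD.const_add (g' c))
  set u : ℝ → ℂ := fun x => (g' x + Complex.I * α * g x) * Complex.exp (-(Complex.I * α * x))
    with hu
  set v : ℝ → ℂ := fun x => (g' x - Complex.I * α * g x) * Complex.exp (Complex.I * α * x)
    with hv
  have hexp : ∀ (β : ℂ) (x : ℝ), HasDerivAt (fun t : ℝ => Complex.exp (β * t))
      (β * Complex.exp (β * x)) x := by
    intro β x
    have h1 : HasDerivAt (fun t : ℝ => β * (t : ℂ)) β x := by
      simpa using (Complex.ofRealCLM.hasDerivAt (x := x)).const_mul β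
    simpa [mul_comm] using h1.cexp
  have hucont : ContinuousOn u (Set.Icc (0:ℝ) d) := by
    apply ContinuousOn.mul
    · exact hcontg'.add ((continuous_const.mul gcont).continuousOn)
    · exact (Complex.continuous_exp.comp
        ((continuous_const.mul Complex.continuous_ofReal).neg)).continuousOn
  have hvcont : ContinuousOn v (Set.Icc (0:ℝ) d) := by
    apply ContinuousOn.mul
    · exact hcontg'.sub ((continuous_const.mul gcont).continuousOn)
    · exact (Complex.continuous_exp.comp
        (continuous_const.mul Complex.continuous_ofReal)).continuousOn
  have huderiv : ∀ x ∈ Set.Ico (0:ℝ) d, HasDerivWithinAt u 0 (Set.Ici x) x := by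
    intro x hx
    have h1 : HasDerivWithinAt (fun t => g' t + Complex.I * α * g t)
        (-α ^ 2 * g x + Complex.I * α * g' x) (Set.Ici x) x :=
      (hg'' x hx).add (((hg x).const_mul (Complex.I * α)).hasDerivWithinAt)
    have h2 : HasDerivWithinAt (fun t : ℝ => Complex.exp (-(Complex.I * α * t)))
        (-(Complex.I * α) * Complex.exp (-(Complex.I * α * x))) (Set.Ici x) x := by
      have := (hexp (-(Complex.I * α)) x).hasDerivWithinAt (s := Set.Ici x)
      simpa [neg_mul] using this
    have h3 := h1.mul h2
    refine h3.congr_deriv ?_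
    linear_combination (-(Complex.exp (-(Complex.I * α * x)) * g x * α ^ 2)) * Complex.I_sq
  have hvderiv : ∀ x ∈ Set.Ico (0:ℝ) d, HasDerivWithinAt v 0 (Set.Ici x) x := by
    intro x hx
    have h1 : HasDerivWithinAt (fun t => g' t - Complex.I * α * g t)
        (-α ^ 2 * g x - Complex.I * α * g' x) (Set.Ici x) x :=
      (hg'' x hx).sub (((hg x).const_mul (Complex.I * α)).hasDerivWithinAt)
    have h2 : HasDerivWithinAt (fun t : ℝ => Complex.exp (Complex.I * α * t))
        ((Complex.I * α) * Complex.exp (Complex.I * α * x)) (Set.Ici x) x :=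
      (hexp (Complex.I * α) x).hasDerivWithinAt
    have h3 := h1.mul h2
    refine h3.congr_deriv ?_
    linear_combination (-(Complex.exp (Complex.I * α * x) * g x * α ^ 2)) * Complex.I_sq
  have huconst := constant_of_has_deriv_right_zero hucont huderiv
  have hvconst := constant_of_has_deriv_right_zero hvcont hvderiv
  intro x hx
  have hux : u x = u c := by rw [huconst x hx, huconst c hc]
  have hvx : v x = v c := by rw [hvconst x hx, hvconst c hc]
  simp only [hu, hv] at hux hvx
  have hexne : ∀ z : ℂ, Complex.exp z ≠ 0 := Complex.exp_ne_zero
  have e1 : Complex.exp (-(Complex.I * α * (x:ℂ))) = (Complex.exp (Complex.I * α * (x:ℂ)))⁻¹ :=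
    Complex.exp_neg _
  have e2 : Complex.exp (-(Complex.I * α * (c:ℂ))) = (Complex.exp (Complex.I * α * (c:ℂ)))⁻¹ :=
    Complex.exp_neg _
  have e3 : Complex.exp (Complex.I * α * ((x:ℂ) - c)) =
      Complex.exp (Complex.I * α * (x:ℂ)) / Complex.exp (Complex.I * α * (c:ℂ)) := by
    rw [← Complex.exp_sub]; ring_nf
  have e4 : Complex.exp (-(Complex.I * α * ((x:ℂ) - c))) =
      Complex.exp (Complex.I * α * (c:ℂ)) / Complex.exp (Complex.I * α * (x:ℂ)) := by
    rw [← Complex.exp_sub]; ring_nf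
  set A := Complex.exp (Complex.I * α * (x:ℂ)) with hA
  set B := Complex.exp (Complex.I * α * (c:ℂ)) with hB
  rw [e1] at hux
  rw [e2] at hux
  rw [e3, e4]
  have hAne : A ≠ 0 := hexne _
  have hBne : B ≠ 0 := hexne _
  have hIne : Complex.I ≠ 0 := Complex.I_ne_zero
  field_simp at hux hvx
  have hne : (2 * Complex.I * α * A * B) ≠ 0 := by
    simp [hAne, hBne, hαne, Complex.I_ne_zero]
  have t2 : (2 * Complex.I * α * A * B) * g x =
      (Complex.I * α * g c + g' c) * A ^ 2 + (Complex.I * α * g c - g' c) * B ^ 2 := by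
    linear_combination A * hux - B * hvx
  have t3 : (2 * Complex.I * α * A * B) * ((g c + g' c / (Complex.I * α)) / 2 * (A / B)
      + (g c - g' c / (Complex.I * α)) / 2 * (B / A)) =
      (Complex.I * α * g c + g' c) * A ^ 2 + (Complex.I * α * g c - g' c) * B ^ 2 := by
    have hiα : Complex.I * α ≠ 0 := mul_ne_zero Complex.I_ne_zero hαne
    obtain ⟨s, hs⟩ : ∃ s, g' c = Complex.I * α * s := ⟨g' c / (Complex.I * α), by field_simp⟩
    rw [hs, mul_div_cancel_left₀ s hiα]
    field_simp
  exact mul_left_cancel₀ hne (t2.trans t3.symm)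

/-- For the constant potential `q = C` on `[0,d]` (zero outside) and
`0 ≤ y < x ≤ d`, `ω ≠ 0`, `ω² ≠ C`, the product of the Jost solutions satisfies
`y1(x,ω)·y2(y,ω) = e^{iωd}( cos(α(d−x+y)) − (iω/α)sin(α(d−x+y)) − (C/α²)sin(α(d−x))sin(αy) )`
with `α² = ω² − C`; consequently the Green function `G(x,y;ω²) = y1(x,ω)y2(y,ω)/(2iω·a(ω))`
equals `e^{iωd}/(2iω·a(ω))` times that expression. -/
theorem green_function_constant_potential
    (d : ℝ) (hd : 0 < d) (C : ℝ)
    (ω : ℂ) (hω : ω ≠ 0) (hωC : ω ^ 2 ≠ (C : ℂ))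
    (α : ℂ) (hα : α ^ 2 = ω ^ 2 - C)
    (y1 y1' y2 y2' : ℝ → ℂ)
    (hy1 : ∀ x, HasDerivAt y1 (y1' x) x)
    (hy1' : ∀ x : ℝ, y1' x = y1' d +
      ∫ t in d..x, (((if t ∈ Set.Icc 0 d then C else 0 : ℝ) : ℂ) - ω ^ 2) * y1 t)
    (hy1d : y1 d = Complex.exp (Complex.I * ω * d))
    (hy1d' : y1' d = Complex.I * ω * Complex.exp (Complex.I * ω * d))
    (hy2 : ∀ x, HasDerivAt y2 (y2' x) x)
    (hy2' : ∀ x : ℝ, y2' x = y2' 0 +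
      ∫ t in (0 : ℝ)..x, (((if t ∈ Set.Icc 0 d then C else 0 : ℝ) : ℂ) - ω ^ 2) * y2 t)
    (hy20 : y2 0 = 1) (hy20' : y2' 0 = -Complex.I * ω)
    (a : ℂ)
    (ha : a = -(1 / (2 * Complex.I * ω)) * (y1' 0 * y2 0 - y1 0 * y2' 0)) :
    ∀ x y : ℝ, 0 ≤ y → y < x → x ≤ d →
      y1 x * y2 y = Complex.exp (Complex.I * ω * d) *
          (Complex.cos (α * ((d : ℂ) - x + y)) -
            (Complex.I * ω / α) * Complex.sin (α * ((d : ℂ) - x + y)) -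
            ((C : ℂ) / α ^ 2) * Complex.sin (α * ((d : ℂ) - x)) * Complex.sin (α * y)) ∧
      y1 x * y2 y / (2 * Complex.I * ω * a) =
        Complex.exp (Complex.I * ω * d) / (2 * Complex.I * ω * a) *
          (Complex.cos (α * ((d : ℂ) - x + y)) -
            (Complex.I * ω / α) * Complex.sin (α * ((d : ℂ) - x + y)) -
            ((C : ℂ) / α ^ 2) * Complex.sin (α * ((d : ℂ) - x)) * Complex.sin (α * y)) := by
  have hαne : α ≠ 0 := by
    intro h
    apply hωC
    rw [h] at hα
    linear_combination -hα
  have hy1form := jost_ode_unique d C ω α hα hαne y1 y1' hy1 d ⟨hd.le, le_refl d⟩ hy1'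
  have hy2form := jost_ode_unique d C ω α hα hαne y2 y2' hy2 0 ⟨le_refl 0, hd.le⟩ hy2'
  have hIsin : ∀ z : ℂ, Complex.I * Complex.sin z =
      (Complex.exp (z * Complex.I) - Complex.exp (-z * Complex.I)) / 2 := by
    intro z
    simp only [Complex.sin]
    linear_combination ((Complex.exp (-z * Complex.I) - Complex.exp (z * Complex.I)) / 2) *
      Complex.I_sq
  have hss : ∀ z w : ℂ, Complex.sin z * Complex.sin w =
      -((Complex.exp (z * Complex.I) - Complex.exp (-z * Complex.I)) *
        (Complex.exp (w * Complex.I) - Complex.exp (-w * Complex.I))) / 4 := by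
    intro z w
    simp only [Complex.sin]
    linear_combination ((Complex.exp (-z * Complex.I) - Complex.exp (z * Complex.I)) *
      (Complex.exp (-w * Complex.I) - Complex.exp (w * Complex.I)) / 4) * Complex.I_sq
  have hC : (C : ℂ) = ω ^ 2 - α ^ 2 := by linear_combination hα
  intro x y hy0 hyx hxd
  have hxm : x ∈ Set.Icc (0:ℝ) d := ⟨le_trans hy0 hyx.le, hxd⟩
  have hym : y ∈ Set.Icc (0:ℝ) d := ⟨hy0, le_trans hyx.le hxd⟩
  have h1 := hy1form x hxm
  have h2 := hy2form y hym
  rw [hy1d, hy1d'] at h1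
  rw [hy20, hy20'] at h2
  simp only [Complex.ofReal_zero, sub_zero] at h2
  have hmain : y1 x * y2 y = Complex.exp (Complex.I * ω * d) *
      (Complex.cos (α * ((d : ℂ) - x + y)) -
        (Complex.I * ω / α) * Complex.sin (α * ((d : ℂ) - x + y)) -
        ((C : ℂ) / α ^ 2) * Complex.sin (α * ((d : ℂ) - x)) * Complex.sin (α * y)) := by
    rw [h1, h2]
    rw [show (Complex.I * ω / α) * Complex.sin (α * ((d : ℂ) - ↑x + ↑y)) =
      ω / α * (Complex.I * Complex.sin (α * ((d : ℂ) - ↑x + ↑y))) from by ring]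
    rw [hIsin]
    rw [mul_assoc ((C : ℂ) / α ^ 2), hss]
    simp only [Complex.cos]
    rw [show Complex.I * α * ((x : ℂ) - (d : ℝ)) =
      -(Complex.I * α * ((d : ℂ) - (x : ℝ))) from by push_cast; ring, neg_neg]
    rw [show (α * ((d : ℂ) - ↑x + ↑y)) * Complex.I =
      Complex.I * α * ((d : ℂ) - ↑x) + Complex.I * α * (↑y : ℂ) from by ring]
    rw [show (α * ((d : ℂ) - ↑x)) * Complex.I = Complex.I * α * ((d : ℂ) - ↑x) from by ring]
    rw [show (α * (↑y : ℂ)) * Complex.I = Complex.I * α * (↑y : ℂ) from by ring]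
    rw [show -(α * ((d : ℂ) - ↑x + ↑y)) * Complex.I =
      -(Complex.I * α * ((d : ℂ) - ↑x) + Complex.I * α * (↑y : ℂ)) from by ring]
    rw [show -(α * ((d : ℂ) - ↑x)) * Complex.I = -(Complex.I * α * ((d : ℂ) - ↑x)) from by ring]
    rw [show -(α * (↑y : ℂ)) * Complex.I = -(Complex.I * α * (↑y : ℂ)) from by ring]
    rw [show -(Complex.I * α * ((d : ℂ) - ↑x) + Complex.I * α * (↑y : ℂ)) =
      -(Complex.I * α * ((d : ℂ) - ↑x)) + -(Complex.I * α * (↑y : ℂ)) from by ring]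
    simp only [Complex.exp_add]
    set P := Complex.exp (Complex.I * α * ((d : ℂ) - ↑x)) with hP
    set Q := Complex.exp (Complex.I * α * (↑y : ℂ)) with hQ
    set P' := Complex.exp (-(Complex.I * α * ((d : ℂ) - ↑x))) with hP'
    set Q' := Complex.exp (-(Complex.I * α * (↑y : ℂ))) with hQ'
    have hPP : P * P' = 1 := by rw [hP, hP', ← Complex.exp_add]; simp
    have hQQ : Q * Q' = 1 := by rw [hQ, hQ', ← Complex.exp_add]; simp
    have hIne : Complex.I ≠ 0 := Complex.I_ne_zero
    rw [hC]
    field_simp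
    ring
  refine ⟨hmain, ?_⟩
  rw [hmain, mul_div_right_comm]
end

section
/- For fixed x ∈ ℝ and real ω → ±∞, the solution c satisfies the asymptotic relations c(x,ω) = cos(ωx) + (h + Q(x)/2)·sin(ωx)/ω + o(1/ω) and c'(x,ω) = −ω·sin(ωx) + (h + Q(x)/2)·cos(ωx) + o(1), where Q(x) = ∫₀ˣ q(t) dt and ' denotes the derivative with respect to x. -/
open Complex Filter Topology Asymptotics MeasureTheory intervalIntegral


lemma ev_abs_ge (a : ℝ) : ∀ᶠ ω : ℝ in atTop ⊔ atBot, a ≤ |ω| := by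
  rw [eventually_sup]
  constructor
  · filter_upwards [eventually_ge_atTop a] with ω hω
    exact hω.trans (le_abs_self ω)
  · filter_upwards [eventually_le_atBot (-a)] with ω hω
    calc a ≤ -ω := by linarith
    _ ≤ |ω| := (neg_le_abs ω)

lemma abs_tendsto : Tendsto (fun ω : ℝ => |ω|) (atTop ⊔ atBot) atTop := by
  rw [tendsto_sup]
  exact ⟨tendsto_abs_atTop_atTop, tendsto_abs_atBot_atTop⟩

lemma RL_interval (q : ℝ → ℝ) (hq : Continuous q) (x : ℝ) :
    Tendsto (fun ω : ℝ => ∫ t in (0:ℝ)..x, (q t : ℂ) * Complex.exp (2 * t * ω * Complex.I))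
      (atTop ⊔ atBot) (𝓝 0) := by
  set f : ℝ → ℂ := (Set.uIoc 0 x).indicator (fun t => (q t : ℂ)) with hf
  have hmap : Tendsto (fun ω : ℝ => -ω / Real.pi) (atTop ⊔ atBot) (cocompact ℝ) := by
    rw [cocompact_eq_atBot_atTop, tendsto_sup]
    constructor
    · apply Tendsto.mono_right _ le_sup_left
      exact (tendsto_neg_atBot_iff.mpr tendsto_id).atBot_div_const Real.pi_pos
    · apply Tendsto.mono_right _ le_sup_right
      exact (tendsto_neg_atTop_iff.mpr tendsto_id).atTop_div_const Real.pi_pos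
  have key := (Real.tendsto_integral_exp_smul_cocompact f).comp hmap
  have heq : ∀ ω : ℝ, (∫ v : ℝ, Real.fourierChar (-(v * (-ω / Real.pi))) • f v)
      = ∫ t in Set.uIoc 0 x, (q t : ℂ) * Complex.exp (2 * t * ω * Complex.I) := by
    intro ω
    rw [← MeasureTheory.integral_indicator measurableSet_uIoc]
    congr 1
    funext v
    by_cases hv : v ∈ Set.uIoc 0 x
    · simp only [hf, Set.indicator_of_mem hv, Circle.smul_def, Real.fourierChar_apply,
        smul_eq_mul]
      rw [mul_comm]
      congr 1
      congr 1
      have hpi : (Real.pi : ℂ) ≠ 0 := by exact_mod_cast Real.pi_ne_zero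
      push_cast
      field_simp
    · simp [hf, Set.indicator_of_notMem hv]
  have key2 : Tendsto (fun ω : ℝ => ∫ t in Set.uIoc 0 x, (q t : ℂ) * Complex.exp (2 * t * ω * Complex.I))
      (atTop ⊔ atBot) (𝓝 0) := by
    refine key.congr ?_
    intro ω
    exact heq ω
  have := key2.const_smul ((if (0:ℝ) ≤ x then (1:ℝ) else -1))
  rw [smul_zero] at this
  refine this.congr ?_
  intro ω
  rw [intervalIntegral_eq_integral_uIoc]

lemma exp_sub_exp' (z : ℂ) : Complex.exp (z*Complex.I) - Complex.exp ((-z)*Complex.I)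
    = 2 * Complex.sin z * Complex.I := by
  rw [Complex.exp_mul_I, Complex.exp_mul_I]
  simp only [Complex.sin_neg, Complex.cos_neg]
  ring

lemma exp_add_exp' (z : ℂ) : Complex.exp (z*Complex.I) + Complex.exp ((-z)*Complex.I)
    = 2 * Complex.cos z := by
  rw [Complex.exp_mul_I, Complex.exp_mul_I]
  simp only [Complex.sin_neg, Complex.cos_neg]
  ring

lemma neg_tendsto : Tendsto (fun ω : ℝ => -ω) (atTop ⊔ atBot) (atTop ⊔ atBot) := by
  rw [tendsto_sup]
  constructor
  · exact tendsto_neg_atTop_atBot.mono_right le_sup_right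
  · exact tendsto_neg_atBot_atTop.mono_right le_sup_left

lemma RLsin (q : ℝ → ℝ) (hq : Continuous q) (x : ℝ) :
    Tendsto (fun ω : ℝ => ∫ t in (0:ℝ)..x, (q t : ℂ) * Complex.sin ((ω:ℂ) * (x - 2*t)))
      (atTop ⊔ atBot) (𝓝 0) := by
  set Z : ℝ → ℂ := fun ω => ∫ t in (0:ℝ)..x, (q t : ℂ) * Complex.exp (2 * t * ω * Complex.I)
    with hZdef
  have hZ : Tendsto Z (atTop ⊔ atBot) (𝓝 0) := RL_interval q hq x
  have hZn : Tendsto (fun ω : ℝ => Z (-ω)) (atTop ⊔ atBot) (𝓝 0) := hZ.comp neg_tendsto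
  have hb : Tendsto (fun ω : ℝ => ‖Z (-ω)‖/2 + ‖Z ω‖/2) (atTop ⊔ atBot) (𝓝 0) := by
    have := (hZn.norm.div_const 2).add (hZ.norm.div_const 2)
    simpa using this
  refine squeeze_zero_norm (fun ω => ?_) hb
  have hint : ∀ w : ℝ, IntervalIntegrable (fun t : ℝ => (q t : ℂ) * Complex.exp (2 * t * w * Complex.I))
      MeasureTheory.volume 0 x := by
    intro w
    apply Continuous.intervalIntegrable
    fun_prop
  have hid : (∫ t in (0:ℝ)..x, (q t : ℂ) * Complex.sin ((ω:ℂ) * (x - 2*t)))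
      = Complex.exp (((ω*x : ℝ):ℂ)*Complex.I)/(2*Complex.I) * Z (-ω)
        - Complex.exp ((-(ω*x) : ℝ)*Complex.I)/(2*Complex.I) * Z ω := by
    rw [hZdef]
    simp only []
    rw [← intervalIntegral.integral_const_mul, ← intervalIntegral.integral_const_mul,
        ← intervalIntegral.integral_sub ((hint (-ω)).const_mul _) ((hint ω).const_mul _)]
    apply intervalIntegral.integral_congr
    intro t ht
    simp only []
    set z : ℂ := (ω:ℂ) * (x - 2*t) with hz
    have e1 : (((ω*x : ℝ):ℂ)*Complex.I) + 2*(t:ℂ)*((-ω : ℝ):ℂ)*Complex.I = z*Complex.I := by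
      rw [hz]; push_cast; ring
    have e2 : ((-(ω*x) : ℝ):ℂ)*Complex.I + 2*(t:ℂ)*((ω : ℝ):ℂ)*Complex.I = (-z)*Complex.I := by
      rw [hz]; push_cast; ring
    calc (q t : ℂ) * Complex.sin z
        = (Complex.exp (z*Complex.I) - Complex.exp ((-z)*Complex.I)) * (q t : ℂ) / (2*Complex.I) := by
          rw [exp_sub_exp']
          field_simp
      _ = (Complex.exp ((((ω*x : ℝ):ℂ)*Complex.I) + 2*(t:ℂ)*((-ω : ℝ):ℂ)*Complex.I)
            - Complex.exp (((-(ω*x) : ℝ):ℂ)*Complex.I + 2*(t:ℂ)*((ω : ℝ):ℂ)*Complex.I)) * (q t : ℂ) / (2*Complex.I) := by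
          rw [e1, e2]
      _ = Complex.exp (((ω*x : ℝ):ℂ)*Complex.I)/(2*Complex.I) * ((q t:ℂ) * Complex.exp (2 * t * ((-ω:ℝ):ℂ) * Complex.I))
            - Complex.exp ((-(ω*x) : ℝ)*Complex.I)/(2*Complex.I) * ((q t:ℂ) * Complex.exp (2 * t * ((ω:ℝ):ℂ) * Complex.I)) := by
          rw [Complex.exp_add, Complex.exp_add]
          ring
  rw [hid]
  have n1 : ‖Complex.exp (((ω*x : ℝ):ℂ)*Complex.I)/(2*Complex.I)‖ = 1/2 := by
    rw [norm_div]
    rw [Complex.norm_exp_ofReal_mul_I]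
    simp
  have n2 : ‖Complex.exp ((-(ω*x) : ℝ)*Complex.I)/(2*Complex.I)‖ = 1/2 := by
    rw [norm_div]
    rw [Complex.norm_exp_ofReal_mul_I]
    simp
  calc ‖Complex.exp (((ω*x : ℝ):ℂ)*Complex.I)/(2*Complex.I) * Z (-ω)
        - Complex.exp ((-(ω*x) : ℝ)*Complex.I)/(2*Complex.I) * Z ω‖
      ≤ ‖Complex.exp (((ω*x : ℝ):ℂ)*Complex.I)/(2*Complex.I) * Z (-ω)‖
        + ‖Complex.exp ((-(ω*x) : ℝ)*Complex.I)/(2*Complex.I) * Z ω‖ := norm_sub_le _ _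
    _ = ‖Z (-ω)‖/2 + ‖Z ω‖/2 := by rw [norm_mul, norm_mul, n1, n2]; ring

lemma RLcos (q : ℝ → ℝ) (hq : Continuous q) (x : ℝ) :
    Tendsto (fun ω : ℝ => ∫ t in (0:ℝ)..x, (q t : ℂ) * Complex.cos ((ω:ℂ) * (x - 2*t)))
      (atTop ⊔ atBot) (𝓝 0) := by
  set Z : ℝ → ℂ := fun ω => ∫ t in (0:ℝ)..x, (q t : ℂ) * Complex.exp (2 * t * ω * Complex.I)
    with hZdef
  have hZ : Tendsto Z (atTop ⊔ atBot) (𝓝 0) := RL_interval q hq x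
  have hZn : Tendsto (fun ω : ℝ => Z (-ω)) (atTop ⊔ atBot) (𝓝 0) := hZ.comp neg_tendsto
  have hb : Tendsto (fun ω : ℝ => ‖Z (-ω)‖/2 + ‖Z ω‖/2) (atTop ⊔ atBot) (𝓝 0) := by
    have := (hZn.norm.div_const 2).add (hZ.norm.div_const 2)
    simpa using this
  refine squeeze_zero_norm (fun ω => ?_) hb
  have hint : ∀ w : ℝ, IntervalIntegrable (fun t : ℝ => (q t : ℂ) * Complex.exp (2 * t * w * Complex.I))
      MeasureTheory.volume 0 x := by
    intro w
    apply Continuous.intervalIntegrable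
    fun_prop
  have hid : (∫ t in (0:ℝ)..x, (q t : ℂ) * Complex.cos ((ω:ℂ) * (x - 2*t)))
      = Complex.exp (((ω*x : ℝ):ℂ)*Complex.I)/2 * Z (-ω)
        + Complex.exp ((-(ω*x) : ℝ)*Complex.I)/2 * Z ω := by
    rw [hZdef]
    simp only []
    rw [← intervalIntegral.integral_const_mul, ← intervalIntegral.integral_const_mul,
        ← intervalIntegral.integral_add ((hint (-ω)).const_mul _) ((hint ω).const_mul _)]
    apply intervalIntegral.integral_congr
    intro t ht
    simp only []
    set z : ℂ := (ω:ℂ) * (x - 2*t) with hz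
    have e1 : (((ω*x : ℝ):ℂ)*Complex.I) + 2*(t:ℂ)*((-ω : ℝ):ℂ)*Complex.I = z*Complex.I := by
      rw [hz]; push_cast; ring
    have e2 : ((-(ω*x) : ℝ):ℂ)*Complex.I + 2*(t:ℂ)*((ω : ℝ):ℂ)*Complex.I = (-z)*Complex.I := by
      rw [hz]; push_cast; ring
    calc (q t : ℂ) * Complex.cos z
        = (Complex.exp (z*Complex.I) + Complex.exp ((-z)*Complex.I)) * (q t : ℂ) / 2 := by
          rw [exp_add_exp']
          ring
      _ = (Complex.exp ((((ω*x : ℝ):ℂ)*Complex.I) + 2*(t:ℂ)*((-ω : ℝ):ℂ)*Complex.I)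
            + Complex.exp (((-(ω*x) : ℝ):ℂ)*Complex.I + 2*(t:ℂ)*((ω : ℝ):ℂ)*Complex.I)) * (q t : ℂ) / 2 := by
          rw [e1, e2]
      _ = Complex.exp (((ω*x : ℝ):ℂ)*Complex.I)/2 * ((q t:ℂ) * Complex.exp (2 * t * ((-ω:ℝ):ℂ) * Complex.I))
            + Complex.exp ((-(ω*x) : ℝ)*Complex.I)/2 * ((q t:ℂ) * Complex.exp (2 * t * ((ω:ℝ):ℂ) * Complex.I)) := by
          rw [Complex.exp_add, Complex.exp_add]
          ring
  rw [hid]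
  have n1 : ‖Complex.exp (((ω*x : ℝ):ℂ)*Complex.I)/2‖ = 1/2 := by
    rw [norm_div]
    rw [Complex.norm_exp_ofReal_mul_I]
    simp
  have n2 : ‖Complex.exp ((-(ω*x) : ℝ)*Complex.I)/2‖ = 1/2 := by
    rw [norm_div]
    rw [Complex.norm_exp_ofReal_mul_I]
    simp
  calc ‖Complex.exp (((ω*x : ℝ):ℂ)*Complex.I)/2 * Z (-ω)
        + Complex.exp ((-(ω*x) : ℝ)*Complex.I)/2 * Z ω‖
      ≤ ‖Complex.exp (((ω*x : ℝ):ℂ)*Complex.I)/2 * Z (-ω)‖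
        + ‖Complex.exp ((-(ω*x) : ℝ)*Complex.I)/2 * Z ω‖ := norm_add_le _ _
    _ = ‖Z (-ω)‖/2 + ‖Z ω‖/2 := by rw [norm_mul, norm_mul, n1, n2]; ring


lemma volterra (q : ℝ → ℝ) (hq : Continuous q) (h : ℂ)
    (c c' : ℂ → ℝ → ℂ)
    (hc : ∀ ω x, HasDerivAt (c ω) (c' ω x) x)
    (hc' : ∀ ω x, HasDerivAt (c' ω) (((q x : ℂ) - ω ^ 2) * c ω x) x)
    (hc0 : ∀ ω, c ω 0 = 1) (hc0' : ∀ ω, c' ω 0 = h)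
    (W : ℂ) (y : ℝ) :
    (W * c W y = W * Complex.cos (W*y) + h * Complex.sin (W*y)
      + ∫ t in (0:ℝ)..y, Complex.sin (W*((y:ℂ)-t)) * q t * c W t) ∧
    (c' W y = -W * Complex.sin (W*y) + h * Complex.cos (W*y)
      + ∫ t in (0:ℝ)..y, Complex.cos (W*((y:ℂ)-t)) * q t * c W t) := by
  have hcc : Continuous (c W) := by
    rw [continuous_iff_continuousAt]; exact fun t => (hc W t).continuousAt
  have hcc' : Continuous (c' W) := by
    rw [continuous_iff_continuousAt]; exact fun t => (hc' W t).continuousAt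
  have cosd : ∀ t : ℝ, HasDerivAt (fun s : ℝ => Complex.cos (W*s)) (-Complex.sin (W*t) * W) t := by
    intro t
    have h1 : HasDerivAt (fun z : ℂ => Complex.cos (W*z)) (-Complex.sin (W*t) * W) (t:ℂ) := by
      have := (Complex.hasDerivAt_cos (W*(t:ℂ))).comp (t:ℂ) ((hasDerivAt_id (t:ℂ)).const_mul W)
      exact this.congr_deriv (by ring)
    exact h1.comp_ofReal
  have sind : ∀ t : ℝ, HasDerivAt (fun s : ℝ => Complex.sin (W*s)) (Complex.cos (W*t) * W) t := by
    intro t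
    have h1 : HasDerivAt (fun z : ℂ => Complex.sin (W*z)) (Complex.cos (W*t) * W) (t:ℂ) := by
      have := (Complex.hasDerivAt_sin (W*(t:ℂ))).comp (t:ℂ) ((hasDerivAt_id (t:ℂ)).const_mul W)
      exact this.congr_deriv (by ring)
    exact h1.comp_ofReal
  set g1 : ℝ → ℂ := fun t => c' W t * Complex.cos (W*t) + W * c W t * Complex.sin (W*t) with hg1def
  set g2 : ℝ → ℂ := fun t => c' W t * Complex.sin (W*t) - W * c W t * Complex.cos (W*t) with hg2def
  have hg1 : ∀ t : ℝ, HasDerivAt g1 ((q t : ℂ) * c W t * Complex.cos (W*t)) t := by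
    intro t
    have := ((hc' W t).mul (cosd t)).add (((hc W t).const_mul W).mul (sind t))
    exact this.congr_deriv (by ring)
  have hg2 : ∀ t : ℝ, HasDerivAt g2 ((q t : ℂ) * c W t * Complex.sin (W*t)) t := by
    intro t
    have := ((hc' W t).mul (sind t)).sub (((hc W t).const_mul W).mul (cosd t))
    exact this.congr_deriv (by ring)
  have int1 : IntervalIntegrable (fun t : ℝ => (q t : ℂ) * c W t * Complex.cos (W*t))
      MeasureTheory.volume 0 y := by
    apply Continuous.intervalIntegrable
    fun_prop
  have int2 : IntervalIntegrable (fun t : ℝ => (q t : ℂ) * c W t * Complex.sin (W*t))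
      MeasureTheory.volume 0 y := by
    apply Continuous.intervalIntegrable
    fun_prop
  have I1 : (∫ t in (0:ℝ)..y, (q t : ℂ) * c W t * Complex.cos (W*t)) = g1 y - h := by
    rw [intervalIntegral.integral_eq_sub_of_hasDerivAt (fun t _ => hg1 t) int1]
    congr 1
    rw [hg1def]
    simp [hc0, hc0']
  have I2 : (∫ t in (0:ℝ)..y, (q t : ℂ) * c W t * Complex.sin (W*t)) = g2 y + W := by
    rw [intervalIntegral.integral_eq_sub_of_hasDerivAt (fun t _ => hg2 t) int2]
    rw [hg2def]
    simp [hc0, hc0']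
  have comb1 : (∫ t in (0:ℝ)..y, Complex.sin (W*((y:ℂ)-t)) * q t * c W t)
      = Complex.sin (W*y) * (∫ t in (0:ℝ)..y, (q t : ℂ) * c W t * Complex.cos (W*t))
        - Complex.cos (W*y) * (∫ t in (0:ℝ)..y, (q t : ℂ) * c W t * Complex.sin (W*t)) := by
    rw [← intervalIntegral.integral_const_mul, ← intervalIntegral.integral_const_mul,
        ← intervalIntegral.integral_sub (int1.const_mul _) (int2.const_mul _)]
    apply intervalIntegral.integral_congr
    intro t ht
    simp only []
    rw [show W*((y:ℂ)-t) = W*y - W*t by ring, Complex.sin_sub]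
    ring
  have comb2 : (∫ t in (0:ℝ)..y, Complex.cos (W*((y:ℂ)-t)) * q t * c W t)
      = Complex.cos (W*y) * (∫ t in (0:ℝ)..y, (q t : ℂ) * c W t * Complex.cos (W*t))
        + Complex.sin (W*y) * (∫ t in (0:ℝ)..y, (q t : ℂ) * c W t * Complex.sin (W*t)) := by
    rw [← intervalIntegral.integral_const_mul, ← intervalIntegral.integral_const_mul,
        ← intervalIntegral.integral_add (int1.const_mul _) (int2.const_mul _)]
    apply intervalIntegral.integral_congr
    intro t ht
    simp only []
    rw [show W*((y:ℂ)-t) = W*y - W*t by ring, Complex.cos_sub]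
    ring
  constructor
  · rw [comb1, I1, I2, hg1def, hg2def]
    simp only []
    linear_combination (-(W * c W y)) * (Complex.sin_sq_add_cos_sq (W*(y:ℂ)))
  · rw [comb2, I1, I2, hg1def, hg2def]
    simp only []
    linear_combination (-(c' W y)) * (Complex.sin_sq_add_cos_sq (W*(y:ℂ)))

/-- For fixed `x` and real `ω → ±∞`,
`c(x,ω) = cos(ωx) + (h + Q(x)/2)·sin(ωx)/ω + o(1/ω)` and
`c'(x,ω) = −ω·sin(ωx) + (h + Q(x)/2)·cos(ωx) + o(1)`, where `Q(x) = ∫₀ˣ q(t) dt`. -/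
theorem c_large_omega_asymptotics
    (d : ℝ) (hd : 0 < d) (q : ℝ → ℝ) (hq : Continuous q)
    (hqsupp : ∀ x : ℝ, x ∉ Set.Icc 0 d → q x = 0) (h : ℂ)
    (c c' : ℂ → ℝ → ℂ)
    (hc : ∀ ω x, HasDerivAt (c ω) (c' ω x) x)
    (hc' : ∀ ω x, HasDerivAt (c' ω) (((q x : ℂ) - ω ^ 2) * c ω x) x)
    (hc0 : ∀ ω, c ω 0 = 1) (hc0' : ∀ ω, c' ω 0 = h)
    (Q : ℝ → ℝ) (hQ : ∀ x, Q x = ∫ t in (0 : ℝ)..x, q t) :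
    ∀ x : ℝ,
      (fun ω : ℝ => c (ω : ℂ) x -
          (Complex.cos ((ω : ℂ) * x) +
            (h + (Q x : ℂ) / 2) * Complex.sin ((ω : ℂ) * x) / (ω : ℂ)))
        =o[atTop ⊔ atBot] (fun ω : ℝ => 1 / ω) ∧
      (fun ω : ℝ => c' (ω : ℂ) x -
          (-(ω : ℂ) * Complex.sin ((ω : ℂ) * x) +
            (h + (Q x : ℂ) / 2) * Complex.cos ((ω : ℂ) * x)))
        =o[atTop ⊔ atBot] (fun _ : ℝ => (1 : ℝ)) := by
  intro x
  -- global bound on q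
  obtain ⟨Mq, hMq0, hMq⟩ : ∃ M : ℝ, 0 ≤ M ∧ ∀ s : ℝ, |q s| ≤ M := by
    obtain ⟨s₀, _, hs₀⟩ := isCompact_Icc.exists_isMaxOn (Set.nonempty_Icc.mpr hd.le)
      (hq.abs.continuousOn (s := Set.Icc 0 d))
    refine ⟨max (|q s₀|) 0, le_max_right _ _, fun s => ?_⟩
    by_cases hs : s ∈ Set.Icc 0 d
    · exact le_trans (hs₀ hs) (le_max_left _ _)
    · rw [hqsupp s hs]; simp
  set A : ℝ := Mq * |x| with hA
  have hA0 : 0 ≤ A := mul_nonneg hMq0 (abs_nonneg x)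
  set C : ℝ := 2 * (1 + ‖h‖) with hC
  have hC0 : 0 ≤ C := by positivity
  set C₂ : ℝ := ‖h‖ + A * C with hC₂
  have hC₂0 : 0 ≤ C₂ := by positivity
  have hcont : ∀ W : ℂ, Continuous (c W) := fun W =>
    continuous_iff_continuousAt.mpr fun t => (hc W t).continuousAt
  -- |t₀| ≤ |x| for t₀ in the interval
  have habs_le : ∀ t₀ : ℝ, t₀ ∈ Set.uIcc 0 x → |t₀| ≤ |x| := by
    intro t₀ ht₀
    rw [Set.mem_uIcc] at ht₀
    rcases abs_cases x with ⟨h1, h2⟩ | ⟨h1, h2⟩ <;> rcases ht₀ with ⟨ha, hb⟩ | ⟨ha, hb⟩ <;>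
      rw [abs_le] <;> constructor <;> linarith
  -- generic integral bound
  have intbound : ∀ (t₀ : ℝ), t₀ ∈ Set.uIcc 0 x → ∀ (g : ℝ → ℂ) (B : ℝ), 0 ≤ B →
      (∀ s, s ∈ Set.uIcc 0 x → ‖g s‖ ≤ Mq * B) → ‖∫ s in (0:ℝ)..t₀, g s‖ ≤ A * B := by
    intro t₀ ht₀ g B hB hg
    have hsub : Set.uIoc (0:ℝ) t₀ ⊆ Set.uIcc 0 x :=
      le_trans Set.uIoc_subset_uIcc (Set.uIcc_subset_uIcc Set.left_mem_uIcc ht₀)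
    have := intervalIntegral.norm_integral_le_of_norm_le_const
      (C := Mq * B) (f := g) (a := (0:ℝ)) (b := t₀) (fun s hs => hg s (hsub hs))
    calc ‖∫ s in (0:ℝ)..t₀, g s‖ ≤ Mq * B * |t₀ - 0| := this
      _ ≤ Mq * B * |x| := by
          rw [sub_zero]
          exact mul_le_mul_of_nonneg_left (habs_le t₀ ht₀) (by positivity)
      _ = A * B := by rw [hA]; ring
  -- trig bounds
  have sinb : ∀ w y : ℝ, ‖Complex.sin ((w:ℂ) * y)‖ ≤ 1 := by
    intro w y
    rw [show ((w:ℂ) * y) = ((w*y : ℝ) : ℂ) by push_cast; ring, ← Complex.ofReal_sin]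
    rw [Complex.norm_real]
    exact abs_le.mpr ⟨Real.neg_one_le_sin _, Real.sin_le_one _⟩
  have cosb : ∀ w y : ℝ, ‖Complex.cos ((w:ℂ) * y)‖ ≤ 1 := by
    intro w y
    rw [show ((w:ℂ) * y) = ((w*y : ℝ) : ℂ) by push_cast; ring, ← Complex.ofReal_cos]
    rw [Complex.norm_real]
    exact abs_le.mpr ⟨Real.neg_one_le_cos _, Real.cos_le_one _⟩
  -- uniform bound on c
  have hbound : ∀ ω : ℝ, 1 ≤ |ω| → 2 * A ≤ |ω| → ∀ t ∈ Set.uIcc 0 x, ‖c (ω:ℂ) t‖ ≤ C := by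
    intro ω hω1 hω2
    obtain ⟨t₀, ht₀, hmax⟩ := isCompact_uIcc.exists_isMaxOn (s := Set.uIcc 0 x)
      ⟨0, Set.left_mem_uIcc⟩ ((hcont (ω:ℂ)).norm.continuousOn)
    set M : ℝ := ‖c (ω:ℂ) t₀‖ with hM
    have hM0 : 0 ≤ M := norm_nonneg _
    have hmax' : ∀ t ∈ Set.uIcc 0 x, ‖c (ω:ℂ) t‖ ≤ M := fun t ht => hmax ht
    have key := (volterra q hq h c c' hc hc' hc0 hc0' (ω:ℂ) t₀).1
    have hib : ‖∫ t in (0:ℝ)..t₀, Complex.sin ((ω:ℂ)*((t₀:ℂ)-t)) * q t * c (ω:ℂ) t‖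
        ≤ A * M := by
      apply intbound t₀ ht₀ _ M hM0
      intro s hs
      calc ‖Complex.sin ((ω:ℂ)*((t₀:ℂ)-s)) * q s * c (ω:ℂ) s‖
          = ‖Complex.sin ((ω:ℂ)*((t₀:ℂ)-s))‖ * ‖((q s : ℝ) : ℂ)‖ * ‖c (ω:ℂ) s‖ := by
            rw [norm_mul, norm_mul]
        _ ≤ 1 * Mq * M := by
            apply mul_le_mul _ (hmax' s hs) (norm_nonneg _) (by positivity)
            apply mul_le_mul _ _ (norm_nonneg _) zero_le_one
            · rw [show ((t₀:ℂ) - (s:ℂ)) = ((t₀ - s : ℝ) : ℂ) by push_cast; ring]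
              exact sinb ω (t₀ - s)
            · rw [Complex.norm_real]; exact hMq s
        _ = Mq * M := by ring
    have hstep : |ω| * M ≤ |ω| + ‖h‖ + A * M := by
      have : ‖(ω:ℂ) * c (ω:ℂ) t₀‖ ≤ |ω| * 1 + ‖h‖ * 1 + A * M := by
        rw [key]
        refine le_trans (norm_add_le _ _) ?_
        refine add_le_add (le_trans (norm_add_le _ _) (add_le_add ?_ ?_)) hib
        · rw [norm_mul, Complex.norm_real, Real.norm_eq_abs]
          exact mul_le_mul_of_nonneg_left (cosb ω t₀) (abs_nonneg ω)
        · rw [norm_mul]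
          exact mul_le_mul_of_nonneg_left (sinb ω t₀) (norm_nonneg h)
      rw [norm_mul, Complex.norm_real, Real.norm_eq_abs] at this
      calc |ω| * M ≤ |ω| * 1 + ‖h‖ * 1 + A * M := this
        _ = |ω| + ‖h‖ + A * M := by ring
    intro t ht
    refine le_trans (hmax' t ht) ?_
    rw [hC]
    nlinarith [hstep, hω1, hω2, hM0, hA0, norm_nonneg h]
  -- remainder estimate
  have hrem : ∀ ω : ℝ, 1 ≤ |ω| → 2 * A ≤ |ω| → ∀ t ∈ Set.uIcc 0 x,
      ‖c (ω:ℂ) t - Complex.cos ((ω:ℂ)*t)‖ ≤ C₂ / |ω| := by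
    intro ω hω1 hω2 t ht
    have key := (volterra q hq h c c' hc hc' hc0 hc0' (ω:ℂ) t).1
    have hib : ‖∫ s in (0:ℝ)..t, Complex.sin ((ω:ℂ)*((t:ℂ)-s)) * q s * c (ω:ℂ) s‖
        ≤ A * C := by
      apply intbound t ht _ C hC0
      intro s hs
      calc ‖Complex.sin ((ω:ℂ)*((t:ℂ)-s)) * q s * c (ω:ℂ) s‖
          = ‖Complex.sin ((ω:ℂ)*((t:ℂ)-s))‖ * ‖((q s : ℝ) : ℂ)‖ * ‖c (ω:ℂ) s‖ := by
            rw [norm_mul, norm_mul]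
        _ ≤ 1 * Mq * C := by
            apply mul_le_mul _ (hbound ω hω1 hω2 s hs) (norm_nonneg _) (by positivity)
            apply mul_le_mul _ _ (norm_nonneg _) zero_le_one
            · rw [show ((t:ℂ) - (s:ℂ)) = ((t - s : ℝ) : ℂ) by push_cast; ring]
              exact sinb ω (t - s)
            · rw [Complex.norm_real]; exact hMq s
        _ = Mq * C := by ring
    have hωpos : (0:ℝ) < |ω| := lt_of_lt_of_le one_pos hω1
    have hkey2 : (ω:ℂ) * (c (ω:ℂ) t - Complex.cos ((ω:ℂ)*t))
        = h * Complex.sin ((ω:ℂ)*t)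
          + ∫ s in (0:ℝ)..t, Complex.sin ((ω:ℂ)*((t:ℂ)-s)) * q s * c (ω:ℂ) s := by
      rw [mul_sub, key]; ring
    have : ‖(ω:ℂ) * (c (ω:ℂ) t - Complex.cos ((ω:ℂ)*t))‖ ≤ C₂ := by
      rw [hkey2]
      refine le_trans (norm_add_le _ _) ?_
      rw [hC₂]
      refine add_le_add ?_ hib
      rw [norm_mul]
      calc ‖h‖ * ‖Complex.sin ((ω:ℂ)*t)‖ ≤ ‖h‖ * 1 :=
            mul_le_mul_of_nonneg_left (sinb ω t) (norm_nonneg _)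
        _ = ‖h‖ := mul_one _
    rw [norm_mul, Complex.norm_real, Real.norm_eq_abs] at this
    rw [le_div_iff₀ hωpos]
    linarith [this]
  -- definitions of remainder integrals
  set E1 : ℝ → ℂ := fun ω => ∫ t in (0:ℝ)..x,
    Complex.sin ((ω:ℂ)*((x:ℂ)-t)) * q t * (c (ω:ℂ) t - Complex.cos ((ω:ℂ)*t)) with hE1def
  set E2 : ℝ → ℂ := fun ω => ∫ t in (0:ℝ)..x,
    Complex.cos ((ω:ℂ)*((x:ℂ)-t)) * q t * (c (ω:ℂ) t - Complex.cos ((ω:ℂ)*t)) with hE2def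
  set R1 : ℝ → ℂ := fun ω => ∫ t in (0:ℝ)..x, (q t : ℂ) * Complex.sin ((ω:ℂ) * (x - 2*t))
    with hR1def
  set R2 : ℝ → ℂ := fun ω => ∫ t in (0:ℝ)..x, (q t : ℂ) * Complex.cos ((ω:ℂ) * (x - 2*t))
    with hR2def
  have hR1t : Tendsto R1 (atTop ⊔ atBot) (𝓝 0) := RLsin q hq x
  have hR2t : Tendsto R2 (atTop ⊔ atBot) (𝓝 0) := RLcos q hq x
  have hev : ∀ᶠ ω : ℝ in atTop ⊔ atBot, 1 ≤ |ω| ∧ 2*A ≤ |ω| :=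
    (ev_abs_ge 1).and (ev_abs_ge (2*A))
  -- bounds on E1, E2
  have hE1b : ∀ ω : ℝ, 1 ≤ |ω| → 2*A ≤ |ω| → ‖E1 ω‖ ≤ A * (C₂/|ω|) := by
    intro ω hω1 hω2
    apply intbound x Set.right_mem_uIcc _ _ (by positivity)
    intro s hs
    calc ‖Complex.sin ((ω:ℂ)*((x:ℂ)-s)) * q s * (c (ω:ℂ) s - Complex.cos ((ω:ℂ)*s))‖
        = ‖Complex.sin ((ω:ℂ)*((x:ℂ)-s))‖ * ‖((q s : ℝ) : ℂ)‖ * ‖c (ω:ℂ) s - Complex.cos ((ω:ℂ)*s)‖ := by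
          rw [norm_mul, norm_mul]
      _ ≤ 1 * Mq * (C₂/|ω|) := by
          apply mul_le_mul _ (hrem ω hω1 hω2 s hs) (norm_nonneg _) (by positivity)
          apply mul_le_mul _ _ (norm_nonneg _) zero_le_one
          · rw [show ((x:ℂ) - (s:ℂ)) = ((x - s : ℝ) : ℂ) by push_cast; ring]
            exact sinb ω (x - s)
          · rw [Complex.norm_real]; exact hMq s
      _ = Mq * (C₂/|ω|) := by ring
  have hE2b : ∀ ω : ℝ, 1 ≤ |ω| → 2*A ≤ |ω| → ‖E2 ω‖ ≤ A * (C₂/|ω|) := by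
    intro ω hω1 hω2
    apply intbound x Set.right_mem_uIcc _ _ (by positivity)
    intro s hs
    calc ‖Complex.cos ((ω:ℂ)*((x:ℂ)-s)) * q s * (c (ω:ℂ) s - Complex.cos ((ω:ℂ)*s))‖
        = ‖Complex.cos ((ω:ℂ)*((x:ℂ)-s))‖ * ‖((q s : ℝ) : ℂ)‖ * ‖c (ω:ℂ) s - Complex.cos ((ω:ℂ)*s)‖ := by
          rw [norm_mul, norm_mul]
      _ ≤ 1 * Mq * (C₂/|ω|) := by
          apply mul_le_mul _ (hrem ω hω1 hω2 s hs) (norm_nonneg _) (by positivity)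
          apply mul_le_mul _ _ (norm_nonneg _) zero_le_one
          · rw [show ((x:ℂ) - (s:ℂ)) = ((x - s : ℝ) : ℂ) by push_cast; ring]
            exact cosb ω (x - s)
          · rw [Complex.norm_real]; exact hMq s
      _ = Mq * (C₂/|ω|) := by ring
  have hdiv0 : Tendsto (fun ω : ℝ => A * (C₂/|ω|)) (atTop ⊔ atBot) (𝓝 0) := by
    have h1 : Tendsto (fun ω : ℝ => (A * C₂) * |ω|⁻¹) (atTop ⊔ atBot) (𝓝 0) := by
      have := (tendsto_inv_atTop_zero.comp abs_tendsto).const_mul (A * C₂)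
      simpa using this
    refine h1.congr fun ω => ?_
    ring
  have hE1t : Tendsto E1 (atTop ⊔ atBot) (𝓝 0) := by
    apply squeeze_zero_norm' _ hdiv0
    filter_upwards [hev] with ω ⟨h1, h2⟩
    exact hE1b ω h1 h2
  have hE2t : Tendsto E2 (atTop ⊔ atBot) (𝓝 0) := by
    apply squeeze_zero_norm' _ hdiv0
    filter_upwards [hev] with ω ⟨h1, h2⟩
    exact hE2b ω h1 h2
  have hQC : (∫ t in (0:ℝ)..x, ((q t : ℝ) : ℂ)) = ((Q x : ℝ) : ℂ) := by
    rw [hQ x, ← intervalIntegral.integral_ofReal]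
  -- splitting identities
  have hsplit1 : ∀ ω : ℝ,
      (∫ t in (0:ℝ)..x, Complex.sin ((ω:ℂ)*((x:ℂ)-t)) * q t * c (ω:ℂ) t)
      = E1 ω + (Q x : ℂ) * Complex.sin ((ω:ℂ)*x) / 2 + R1 ω / 2 := by
    intro ω
    have hccω : Continuous (c (ω:ℂ)) := hcont _
    have i1 : IntervalIntegrable (fun t : ℝ =>
        Complex.sin ((ω:ℂ)*((x:ℂ)-t)) * q t * (c (ω:ℂ) t - Complex.cos ((ω:ℂ)*t)))
        MeasureTheory.volume 0 x := (by fun_prop : Continuous _).intervalIntegrable _ _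
    have i2 : IntervalIntegrable (fun t : ℝ =>
        Complex.sin ((ω:ℂ)*((x:ℂ)-t)) * q t * Complex.cos ((ω:ℂ)*t))
        MeasureTheory.volume 0 x := (by fun_prop : Continuous _).intervalIntegrable _ _
    have i3 : IntervalIntegrable (fun t : ℝ => Complex.sin ((ω:ℂ)*x)/2 * (q t : ℂ))
        MeasureTheory.volume 0 x := (by fun_prop : Continuous _).intervalIntegrable _ _
    have i4 : IntervalIntegrable (fun t : ℝ => (1:ℂ)/2 * ((q t : ℂ) * Complex.sin ((ω:ℂ) * (x - 2*t))))
        MeasureTheory.volume 0 x := (by fun_prop : Continuous _).intervalIntegrable _ _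
    have step1 : (∫ t in (0:ℝ)..x, Complex.sin ((ω:ℂ)*((x:ℂ)-t)) * q t * c (ω:ℂ) t)
        = E1 ω + ∫ t in (0:ℝ)..x, Complex.sin ((ω:ℂ)*((x:ℂ)-t)) * q t * Complex.cos ((ω:ℂ)*t) := by
      rw [hE1def]
      simp only []
      rw [← intervalIntegral.integral_add i1 i2]
      apply intervalIntegral.integral_congr
      intro t ht
      simp only []
      ring
    have step2 : (∫ t in (0:ℝ)..x, Complex.sin ((ω:ℂ)*((x:ℂ)-t)) * q t * Complex.cos ((ω:ℂ)*t))
        = (Q x : ℂ) * Complex.sin ((ω:ℂ)*x) / 2 + R1 ω / 2 := by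
      have pw : ∀ t ∈ Set.uIcc (0:ℝ) x,
          Complex.sin ((ω:ℂ)*((x:ℂ)-t)) * q t * Complex.cos ((ω:ℂ)*t)
          = Complex.sin ((ω:ℂ)*x)/2 * (q t : ℂ)
            + (1:ℂ)/2 * ((q t : ℂ) * Complex.sin ((ω:ℂ) * (x - 2*t))) := by
        intro t ht
        have e1 : (ω:ℂ)*x = (ω:ℂ)*((x:ℂ)-t) + (ω:ℂ)*t := by push_cast; ring
        have e2 : (ω:ℂ)*((x:ℂ) - 2*t) = (ω:ℂ)*((x:ℂ)-t) - (ω:ℂ)*t := by push_cast; ring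
        rw [e1, e2, Complex.sin_add, Complex.sin_sub]
        ring
      rw [intervalIntegral.integral_congr pw, intervalIntegral.integral_add i3 i4,
          intervalIntegral.integral_const_mul, intervalIntegral.integral_const_mul, hQC]
      rw [hR1def]
      simp only []
      ring
    rw [step1, step2]
    ring
  have hsplit2 : ∀ ω : ℝ,
      (∫ t in (0:ℝ)..x, Complex.cos ((ω:ℂ)*((x:ℂ)-t)) * q t * c (ω:ℂ) t)
      = E2 ω + (Q x : ℂ) * Complex.cos ((ω:ℂ)*x) / 2 + R2 ω / 2 := by
    intro ω
    have hccω : Continuous (c (ω:ℂ)) := hcont _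
    have i1 : IntervalIntegrable (fun t : ℝ =>
        Complex.cos ((ω:ℂ)*((x:ℂ)-t)) * q t * (c (ω:ℂ) t - Complex.cos ((ω:ℂ)*t)))
        MeasureTheory.volume 0 x := (by fun_prop : Continuous _).intervalIntegrable _ _
    have i2 : IntervalIntegrable (fun t : ℝ =>
        Complex.cos ((ω:ℂ)*((x:ℂ)-t)) * q t * Complex.cos ((ω:ℂ)*t))
        MeasureTheory.volume 0 x := (by fun_prop : Continuous _).intervalIntegrable _ _
    have i3 : IntervalIntegrable (fun t : ℝ => Complex.cos ((ω:ℂ)*x)/2 * (q t : ℂ))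
        MeasureTheory.volume 0 x := (by fun_prop : Continuous _).intervalIntegrable _ _
    have i4 : IntervalIntegrable (fun t : ℝ => (1:ℂ)/2 * ((q t : ℂ) * Complex.cos ((ω:ℂ) * (x - 2*t))))
        MeasureTheory.volume 0 x := (by fun_prop : Continuous _).intervalIntegrable _ _
    have step1 : (∫ t in (0:ℝ)..x, Complex.cos ((ω:ℂ)*((x:ℂ)-t)) * q t * c (ω:ℂ) t)
        = E2 ω + ∫ t in (0:ℝ)..x, Complex.cos ((ω:ℂ)*((x:ℂ)-t)) * q t * Complex.cos ((ω:ℂ)*t) := by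
      rw [hE2def]
      simp only []
      rw [← intervalIntegral.integral_add i1 i2]
      apply intervalIntegral.integral_congr
      intro t ht
      simp only []
      ring
    have step2 : (∫ t in (0:ℝ)..x, Complex.cos ((ω:ℂ)*((x:ℂ)-t)) * q t * Complex.cos ((ω:ℂ)*t))
        = (Q x : ℂ) * Complex.cos ((ω:ℂ)*x) / 2 + R2 ω / 2 := by
      have pw : ∀ t ∈ Set.uIcc (0:ℝ) x,
          Complex.cos ((ω:ℂ)*((x:ℂ)-t)) * q t * Complex.cos ((ω:ℂ)*t)
          = Complex.cos ((ω:ℂ)*x)/2 * (q t : ℂ)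
            + (1:ℂ)/2 * ((q t : ℂ) * Complex.cos ((ω:ℂ) * (x - 2*t))) := by
        intro t ht
        have e1 : (ω:ℂ)*x = (ω:ℂ)*((x:ℂ)-t) + (ω:ℂ)*t := by push_cast; ring
        have e2 : (ω:ℂ)*((x:ℂ) - 2*t) = (ω:ℂ)*((x:ℂ)-t) - (ω:ℂ)*t := by push_cast; ring
        rw [e1, e2, Complex.cos_add, Complex.cos_sub]
        ring
      rw [intervalIntegral.integral_congr pw, intervalIntegral.integral_add i3 i4,
          intervalIntegral.integral_const_mul, intervalIntegral.integral_const_mul, hQC]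
      rw [hR2def]
      simp only []
      ring
    rw [step1, step2]
    ring
  have hne : ∀ᶠ ω : ℝ in atTop ⊔ atBot, (ω:ℂ) ≠ 0 := by
    filter_upwards [ev_abs_ge 1] with ω hω
    have : ω ≠ 0 := by intro hz; rw [hz] at hω; simp at hω; linarith
    exact Complex.ofReal_ne_zero.mpr this
  constructor
  · -- first asymptotic
    have hid1 : ∀ ω : ℝ, (ω:ℂ) ≠ 0 →
        (ω:ℂ) * (c (ω:ℂ) x - (Complex.cos ((ω:ℂ)*x)
          + (h + (Q x : ℂ)/2) * Complex.sin ((ω:ℂ)*x) / (ω:ℂ)))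
        = E1 ω + R1 ω / 2 := by
      intro ω hω
      have key := (volterra q hq h c c' hc hc' hc0 hc0' (ω:ℂ) x).1
      have hcan : (ω:ℂ) * ((h + (Q x : ℂ)/2) * Complex.sin ((ω:ℂ)*x) / (ω:ℂ))
          = (h + (Q x : ℂ)/2) * Complex.sin ((ω:ℂ)*x) := by
        field_simp
      calc (ω:ℂ) * (c (ω:ℂ) x - (Complex.cos ((ω:ℂ)*x)
            + (h + (Q x : ℂ)/2) * Complex.sin ((ω:ℂ)*x) / (ω:ℂ)))
          = (ω:ℂ) * c (ω:ℂ) x - (ω:ℂ) * Complex.cos ((ω:ℂ)*x)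
            - (h + (Q x : ℂ)/2) * Complex.sin ((ω:ℂ)*x) := by
            rw [mul_sub, mul_add, hcan]; ring
        _ = E1 ω + R1 ω / 2 := by
            rw [key, hsplit1 ω]; ring
    have hGt : Tendsto (fun ω : ℝ => E1 ω + R1 ω / 2) (atTop ⊔ atBot) (𝓝 0) := by
      have := hE1t.add (hR1t.div_const 2)
      simpa using this
    have hG' : Tendsto (fun ω : ℝ => (ω:ℂ) * (c (ω:ℂ) x - (Complex.cos ((ω:ℂ)*x)
        + (h + (Q x : ℂ)/2) * Complex.sin ((ω:ℂ)*x) / (ω:ℂ)))) (atTop ⊔ atBot) (𝓝 0) := by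
      apply hGt.congr'
      filter_upwards [hne] with ω hω
      exact (hid1 ω hω).symm
    have hO : (fun ω : ℝ => ((ω:ℂ))⁻¹) =O[atTop ⊔ atBot] (fun ω : ℝ => 1/ω) := by
      apply isBigO_of_le
      intro ω
      simp [one_div, norm_inv, Complex.norm_real, Real.norm_eq_abs]
    have ho : (fun ω : ℝ => (ω:ℂ) * (c (ω:ℂ) x - (Complex.cos ((ω:ℂ)*x)
        + (h + (Q x : ℂ)/2) * Complex.sin ((ω:ℂ)*x) / (ω:ℂ))))
        =o[atTop ⊔ atBot] (fun _ : ℝ => (1:ℝ)) := (isLittleO_one_iff ℝ).mpr hG'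
    have := hO.mul_isLittleO ho
    refine this.congr' ?_ ?_
    · filter_upwards [hne] with ω hω
      rw [inv_mul_cancel_left₀ hω]
    · filter_upwards with ω
      ring
  · -- second asymptotic
    have hid2 : ∀ ω : ℝ,
        c' (ω:ℂ) x - (-(ω:ℂ) * Complex.sin ((ω:ℂ)*x)
          + (h + (Q x : ℂ)/2) * Complex.cos ((ω:ℂ)*x))
        = E2 ω + R2 ω / 2 := by
      intro ω
      have key := (volterra q hq h c c' hc hc' hc0 hc0' (ω:ℂ) x).2
      rw [key, hsplit2 ω]
      ring
    rw [isLittleO_one_iff ℝ]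
    have hGt : Tendsto (fun ω : ℝ => E2 ω + R2 ω / 2) (atTop ⊔ atBot) (𝓝 0) := by
      have := hE2t.add (hR2t.div_const 2)
      simpa using this
    exact hGt.congr fun ω => (hid2 ω).symm
end
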